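/- arXiv:1402.5165 — 4 statements merged into one kernel-verified Lean document; each statement's English description precedes it below -/
import Mathlib

section
/- Let S be a correlated-strategies solution of finite games. If S satisfies Strategic Equivalence (SE) and Pure Individual Rationality (PIR), then for every game u, every element of S(u) is a coarse-correlated equilibrium of u, i.e. S(u) ⊆ CCE(u). -/
open scoped Classical

noncomputable section

/-- A finite normal-form game on action sets `A i`: a payoff function for each player. -/
abbrev Game {n : ℕ} (A : Fin n → Type*) : Type _ :=
  Fin n → (∀ j, A j) → ℝ

/-- Opponents' action profiles of player `i`. -/
abbrev Opp {n : ℕ} (A : Fin n → Type*) (i : Fin n) : Type _ :=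
  ∀ j : {j : Fin n // j ≠ i}, A j.1

/-- The game `z(c, i, b₋ᵢ)`: player `i` receives payoff `c` at every profile whose
opponents' component equals `b`, and `0` otherwise; all other players always get `0`. -/
def zGame {n : ℕ} {A : Fin n → Type*} (c : ℝ) (i : Fin n) (b : Opp A i) : Game A :=
  fun j a => if j = i ∧ (∀ k : {k : Fin n // k ≠ i}, a k.1 = b k) then c else 0

/-- The full action profile obtained from own action `ai` of player `i` and an
opponents' profile `b`. -/
def merge {n : ℕ} {A : Fin n → Type*} (i : Fin n) (ai : A i) (b : Opp A i) : ∀ j, A j :=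
  fun j => if h : j = i then cast (congrArg A h.symm) ai else b ⟨j, h⟩

/-- The pure individually rational value of player `i`:
`pir_i(u) = max_{a_i} min_{a_{-i}} u_i(a_i, a_{-i})`. -/
def pir {n : ℕ} {A : Fin n → Type*} (u : Game A) (i : Fin n) : ℝ :=
  ⨆ ai : A i, ⨅ b : Opp A i, u i (merge i ai b)

/-- `a` is a pure Nash equilibrium of `u`. -/
def IsPNE {n : ℕ} {A : Fin n → Type*} (u : Game A) (a : ∀ j, A j) : Prop :=
  ∀ (i : Fin n) (bi : A i), u i (Function.update a i bi) ≤ u i a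

/-- A correlated strategy: a probability distribution on the set `A` of action profiles. -/
abbrev CorrDist {n : ℕ} (A : Fin n → Type*) [∀ i, Fintype (A i)] : Type _ :=
  {x : (∀ j, A j) → ℝ // (∀ a, 0 ≤ x a) ∧ ∑ a, x a = 1}

section Aux
variable {n : ℕ} {A : Fin n → Type*}

/-- The opponents' component of a full profile. -/
def restr (i : Fin n) (a : ∀ j, A j) : Opp A i := fun k => a k.1

lemma zGame_apply (c : ℝ) (i : Fin n) (b : Opp A i) (a : ∀ j, A j) :
    zGame c i b i a = if restr i a = b then c else 0 := by
  unfold zGame restr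
  congr 1
  simp [funext_iff]

lemma merge_restr (i : Fin n) (bi : A i) (a : ∀ j, A j) :
    merge i bi (restr i a) = Function.update a i bi := by
  funext j
  unfold merge restr Function.update
  by_cases h : j = i
  · subst h; simp
  · simp [h]

lemma restr_merge (i : Fin n) (bi : A i) (b : Opp A i) :
    restr i (merge i bi b) = b := by
  funext k
  unfold restr merge
  rw [dif_neg k.2]

lemma merge_self (i : Fin n) (bi : A i) (b : Opp A i) : merge i bi b i = bi := by
  unfold merge
  simp

end Aux

/-- Any correlated-strategies solution satisfying Strategic Equivalence (SE) and
Pure Individual Rationality (PIR) only outputs coarse-correlated equilibria. -/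
theorem statement2 {n : ℕ} (hn : 0 < n) (A : Fin n → Type*)
    [∀ i, Fintype (A i)] [∀ i, Nonempty (A i)]
    (S : Game A → Set (CorrDist A))
    (SE : ∀ (u : Game A) (c : ℝ) (i : Fin n) (b : Opp A i), S u = S (u + zGame c i b))
    (PIR : ∀ u : Game A, ∀ x ∈ S u, ∀ i : Fin n, ∑ a, x.1 a * u i a ≥ pir u i) :
    ∀ u : Game A, ∀ x ∈ S u, ∀ (i : Fin n) (bi : A i),
      ∑ a, x.1 a * u i a ≥ ∑ a, x.1 a * u i (Function.update a i bi) := by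
  intro u x hx i bi
  set c : Opp A i → ℝ := fun b => -(u i (merge i bi b)) with hc
  set v : Game A := u + ∑ b : Opp A i, zGame (c b) i b with hvdef
  -- x is in S v by repeated strategic equivalence
  have key : ∀ s : Finset (Opp A i), S (u + ∑ b ∈ s, zGame (c b) i b) = S u := by
    intro s
    induction s using Finset.induction with
    | empty => simp
    | insert _ _ hbs ih =>
        rw [Finset.sum_insert hbs, add_comm (zGame _ i _), ← add_assoc, ← SE, ih]
  have hxv : x ∈ S v := by rw [hvdef, key Finset.univ]; exact hx
  -- pointwise value of v for player i
  have hv : ∀ a, v i a = u i a - u i (Function.update a i bi) := by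
    intro a
    show u i a + (∑ b : Opp A i, zGame (c b) i b) i a = _
    rw [Finset.sum_apply, Finset.sum_apply]
    simp only [zGame_apply]
    rw [Finset.sum_ite_eq Finset.univ (restr i a) c]
    simp [hc, merge_restr]
    ring
  -- pir of v is nonnegative
  have hvm : ∀ b : Opp A i, v i (merge i bi b) = 0 := by
    intro b
    rw [hv]
    have : Function.update (merge i bi b) i bi = merge i bi b :=
      Function.update_eq_self_iff.2 (merge_self i bi b).symm
    rw [this, sub_self]
  have hpir : (0 : ℝ) ≤ pir v i := by
    have h1 : (⨅ b : Opp A i, v i (merge i bi b)) ≤ pir v i := by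
      unfold pir
      exact le_ciSup (Set.Finite.bddAbove
        (Set.finite_range fun ai => ⨅ b : Opp A i, v i (merge i ai b))) bi
    have h2 : (⨅ b : Opp A i, v i (merge i bi b)) = 0 := by
      simp [hvm]
    linarith
  have hP := PIR v x hxv i
  have hsum : ∑ a, x.1 a * v i a
      = ∑ a, x.1 a * u i a - ∑ a, x.1 a * u i (Function.update a i bi) := by
    rw [← Finset.sum_sub_distrib]
    apply Finset.sum_congr rfl
    intro a _
    rw [hv, mul_sub]
  rw [hsum] at hP
  linarith
end
end

section
/- Let S be a pure-strategies solution of finite games. If S satisfies Strategic Equivalence (SE) and the Simultaneous Maximizer axiom (SM), then for every game u, every pure Nash equilibrium of u belongs to S(u), i.e. PNE(u) ⊆ S(u). -/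
open scoped Classical

noncomputable section

lemma merge_restrict {n : ℕ} {A : Fin n → Type*} (i : Fin n) (ai : A i) (a : ∀ j, A j) :
    merge i ai (fun k => a k.1) = Function.update a i ai := by
  funext j
  unfold merge
  by_cases h : j = i
  · subst h; simp
  · simp [h, Function.update_of_ne h]

lemma merge_self_s4 {n : ℕ} {A : Fin n → Type*} (i : Fin n) (a : ∀ j, A j) :
    merge i (a i) (fun k => a k.1) = a := by
  rw [merge_restrict, Function.update_eq_self]

/-- Any pure-strategies solution satisfying Strategic Equivalence (SE) and the
Simultaneous Maximizer axiom (SM) contains every pure Nash equilibrium. -/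
theorem statement4 {n : ℕ} (hn : 0 < n) (A : Fin n → Type*)
    [∀ i, Fintype (A i)] [∀ i, Nonempty (A i)]
    (S : Game A → Set (∀ j, A j))
    (SE : ∀ (u : Game A) (c : ℝ) (i : Fin n) (b : Opp A i), S u = S (u + zGame c i b))
    (SM : ∀ (u : Game A) (a : ∀ j, A j),
      (∀ (i : Fin n) (b : ∀ j, A j), u i a ≥ u i b) → a ∈ S u) :
    ∀ u : Game A, ∀ a : ∀ j, A j, IsPNE u a → a ∈ S u := by
  classical
  intro u a ha
  set Msup : ∀ i : Fin n, Opp A i → ℝ := fun i b => ⨆ ai : A i, u i (merge i ai b) with hM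
  set c : (Σ i : Fin n, Opp A i) → ℝ := fun p => u p.1 a - Msup p.1 p.2 with hc
  set v : Game A := u + ∑ p : (Σ i : Fin n, Opp A i), zGame (c p) p.1 p.2 with hv
  -- S u = S v by repeated SE
  have key : ∀ s : Finset (Σ i : Fin n, Opp A i),
      S u = S (u + ∑ p ∈ s, zGame (c p) p.1 p.2) := by
    intro s
    induction s using Finset.induction_on with
    | empty => simp
    | @insert p s hpn ih =>
      rw [Finset.sum_insert hpn, ih, SE (u + ∑ x ∈ s, zGame (c x) x.1 x.2) (c p) p.1 p.2]
      rw [add_assoc, add_comm (∑ x ∈ s, zGame (c x) x.1 x.2) (zGame (c p) p.1 p.2)]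
  have hSv : S u = S v := key Finset.univ
  -- evaluate v
  have hval : ∀ (i : Fin n) (x : ∀ j, A j),
      v i x = u i x + (u i a - Msup i (fun k => x k.1)) := by
    intro i x
    have h1 : v i x = u i x + ∑ p : (Σ i : Fin n, Opp A i), zGame (c p) p.1 p.2 i x := by
      rw [hv]
      simp [Finset.sum_apply]
    rw [h1]
    congr 1
    rw [Finset.sum_eq_single (⟨i, fun k => x k.1⟩ : Σ i : Fin n, Opp A i)]
    · simp [zGame, hc]
    · intro p _ hp
      unfold zGame
      rw [if_neg]
      rintro ⟨h1, h2⟩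
      apply hp
      obtain ⟨pi, pb⟩ := p
      dsimp at h1
      subst h1
      congr 1
      funext k
      exact (h2 k).symm
    · intro h; exact absurd (Finset.mem_univ _) h
  -- Msup i (restr a) = u i a
  have hbdd : ∀ (i : Fin n) (b : Opp A i), BddAbove (Set.range fun ai : A i => u i (merge i ai b)) :=
    fun i b => (Set.finite_range _).bddAbove
  have hMa : ∀ i : Fin n, Msup i (fun k => a k.1) = u i a := by
    intro i
    apply le_antisymm
    · apply ciSup_le
      intro ai
      rw [merge_restrict]
      exact ha i ai
    · have := le_ciSup (hbdd i (fun k => a k.1)) (a i)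
      rwa [merge_self_s4] at this
  -- a is a simultaneous maximizer of v
  have hmax : ∀ (i : Fin n) (x : ∀ j, A j), v i a ≥ v i x := by
    intro i x
    rw [hval i x, hval i a, hMa i]
    have hx : u i x ≤ Msup i (fun k => x k.1) := by
      have := le_ciSup (hbdd i (fun k => x k.1)) (x i)
      rwa [merge_self_s4] at this
    linarith
  rw [hSv]
  exact SM v a hmax
end
end

section
/- The pure Nash equilibrium correspondence, viewed as a pure-strategies solution S(u) = PNE(u) of finite games, satisfies Strategic Equivalence (SE), Pure Individual Rationality (PIR), and the Simultaneous Maximizer axiom (SM). (Hence, combined with the converse, PNE is the unique pure-strategies solution satisfying these three axioms.) -/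
open scoped Classical

noncomputable section

lemma merge_eq_update {n : ℕ} {A : Fin n → Type*} (i : Fin n) (ai : A i) (x : ∀ j, A j) :
    merge i ai (fun k => x k.1) = Function.update x i ai := by
  funext j
  by_cases h : j = i
  · subst h; simp [merge, Function.update]
  · simp [merge, Function.update, h]

lemma zGame_update {n : ℕ} {A : Fin n → Type*} (c : ℝ) (i : Fin n) (b : Opp A i)
    (a : ∀ j, A j) (bi : A i) :
    zGame c i b i (Function.update a i bi) = zGame c i b i a := by
  simp only [zGame]
  congr 1
  simp only [eq_iff_iff, true_and]
  constructor <;> intro h k <;> have := h k <;>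
    simpa [Function.update, k.2] using this

/-- The pure Nash equilibrium correspondence `u ↦ PNE(u)` satisfies Strategic
Equivalence (SE), Pure Individual Rationality (PIR), and the Simultaneous
Maximizer axiom (SM). -/
theorem statement8 {n : ℕ} (hn : 0 < n) (A : Fin n → Type*)
    [∀ i, Fintype (A i)] [∀ i, Nonempty (A i)] :
    (∀ (u : Game A) (c : ℝ) (i : Fin n) (b : Opp A i),
        {a | IsPNE u a} = {a | IsPNE (u + zGame c i b) a}) ∧
    (∀ u : Game A, ∀ x ∈ {a | IsPNE u a}, ∀ i : Fin n, u i x ≥ pir u i) ∧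
    (∀ (u : Game A) (a : ∀ j, A j),
        (∀ (i : Fin n) (b : ∀ j, A j), u i a ≥ u i b) → a ∈ {a' | IsPNE u a'}) := by
  refine ⟨?_, ?_, ?_⟩
  · intro u c i b
    ext a
    simp only [Set.mem_setOf_eq, IsPNE]
    constructor <;> intro ha j bj <;> have h := ha j bj <;>
      by_cases hji : j = i
    · subst hji
      simpa [Pi.add_apply, zGame_update c j b a bj] using h
    · simpa [Pi.add_apply, zGame, hji] using h
    · subst hji
      simpa [Pi.add_apply, zGame_update c j b a bj] using h
    · simpa [Pi.add_apply, zGame, hji] using h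
  · intro u x hx i
    unfold pir
    refine ciSup_le fun ai => ?_
    calc ⨅ b : Opp A i, u i (merge i ai b)
        ≤ u i (merge i ai (fun k => x k.1)) :=
          ciInf_le (Set.Finite.bddBelow (Set.finite_range _)) _
      _ = u i (Function.update x i ai) := by rw [merge_eq_update]
      _ ≤ u i x := hx i ai
  · intro u a ha i bi
    exact ha i _
end
end

section
/- Let S be a pure-strategies solution of continuous convex games on compact convex action sets. If S satisfies Continuous Strategic Equivalence (CSE), Pure Individual Rationality (PIR), and the Simultaneous Maximizer axiom (SM), then S coincides with pure Nash equilibrium: S(u) = PNE(u) for every continuous convex game u. -/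
open scoped Classical

noncomputable section

variable {n : ℕ} {E : Fin n → Type*}
  [∀ i, NormedAddCommGroup (E i)] [∀ i, NormedSpace ℝ (E i)]

/-- Action profiles: one action from each player's action set `A i`. -/
abbrev CProfile (A : ∀ i, Set (E i)) : Type _ := ∀ j, ↥(A j)

/-- A game with action sets `A i`: a payoff function for each player. -/
abbrev CGame (A : ∀ i, Set (E i)) : Type _ := Fin n → CProfile A → ℝ

/-- Opponents' action profiles of player `i`. -/
abbrev COpp (A : ∀ i, Set (E i)) (i : Fin n) : Type _ :=
  ∀ j : {j : Fin n // j ≠ i}, ↥(A j.1)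

/-- The game `z(i, f)`: player `i` receives payoff `f(a₋ᵢ)` at every profile `a`
(irrespective of his own action); every other player always gets `0`. -/
def zC (A : ∀ i, Set (E i)) (i : Fin n) (f : COpp A i → ℝ) : CGame A :=
  fun j a => if j = i then f (fun k => a k.1) else 0

/-- The full profile obtained from own action `ai` of player `i` and an opponents'
profile `b`. -/
def mergeC (A : ∀ i, Set (E i)) (i : Fin n) (ai : ↥(A i)) (b : COpp A i) :
    CProfile A :=
  fun j => if h : j = i then cast (congrArg (fun t => ↥(A t)) h.symm) ai else b ⟨j, h⟩

/-- The pure individually rational value of player `i`: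
`pir_i(u) = max_{a_i} min_{a_{-i}} u_i(a_i, a_{-i})`. -/
def pirC (A : ∀ i, Set (E i)) (u : CGame A) (i : Fin n) : ℝ :=
  ⨆ ai : ↥(A i), ⨅ b : COpp A i, u i (mergeC A i ai b)

/-- A continuous convex game: each payoff function is continuous, and each player's
payoff is a convex function of his own action (for every fixed opponents' profile). -/
def IsCCGame (A : ∀ i, Set (E i)) (hconv : ∀ i, Convex ℝ (A i)) (u : CGame A) : Prop :=
  (∀ i, Continuous (u i)) ∧
  ∀ (i : Fin n) (a : CProfile A) (x y : ↥(A i)) (s t : ℝ)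
    (hs : 0 ≤ s) (ht : 0 ≤ t) (hst : s + t = 1),
    u i (Function.update a i ⟨s • (x : E i) + t • (y : E i),
        hconv i x.2 y.2 hs ht hst⟩) ≤
      s * u i (Function.update a i x) + t * u i (Function.update a i y)

/-- `a` is a pure Nash equilibrium of `u`. -/
def IsPNEc (A : ∀ i, Set (E i)) (u : CGame A) (a : CProfile A) : Prop :=
  ∀ (i : Fin n) (bi : ↥(A i)), u i (Function.update a i bi) ≤ u i a

/-- `a` is a strict pure Nash equilibrium of `u`. -/
def IsStrictPNEc (A : ∀ i, Set (E i)) (u : CGame A) (a : CProfile A) : Prop :=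
  ∀ (i : Fin n) (bi : ↥(A i)), bi ≠ a i → u i (Function.update a i bi) < u i a


set_option linter.unusedSectionVars false


/-- Restriction of a profile to the opponents of `i`. -/
def restC (A : ∀ i, Set (E i)) (i : Fin n) (a : CProfile A) : COpp A i := fun k => a k.1

lemma mergeC_apply_self (A : ∀ i, Set (E i)) (i : Fin n) (ai : ↥(A i)) (b : COpp A i) :
    mergeC A i ai b i = ai := by simp [mergeC]

lemma mergeC_apply_ne (A : ∀ i, Set (E i)) (i : Fin n) (ai : ↥(A i)) (b : COpp A i)
    {j : Fin n} (h : j ≠ i) : mergeC A i ai b j = b ⟨j, h⟩ := by simp [mergeC, h]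

lemma restC_mergeC (A : ∀ i, Set (E i)) (i : Fin n) (ai : ↥(A i)) (b : COpp A i) :
    restC A i (mergeC A i ai b) = b := by
  funext k
  simpa [restC] using mergeC_apply_ne A i ai b k.2

lemma mergeC_restC (A : ∀ i, Set (E i)) (i : Fin n) (a : CProfile A) :
    mergeC A i (a i) (restC A i a) = a := by
  funext j
  by_cases h : j = i
  · subst h; simp [mergeC]
  · simp [mergeC, h, restC]

lemma update_eq_mergeC (A : ∀ i, Set (E i)) (i : Fin n) (a : CProfile A) (ai : ↥(A i)) :
    Function.update a i ai = mergeC A i ai (restC A i a) := by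
  funext j
  by_cases h : j = i
  · subst h; simp [mergeC]
  · simp [mergeC, h, restC, Function.update_of_ne h]

lemma restC_update (A : ∀ i, Set (E i)) (i : Fin n) (a : CProfile A) (ai : ↥(A i)) :
    restC A i (Function.update a i ai) = restC A i a := by
  funext k
  simp [restC, Function.update_of_ne k.2]

lemma continuous_restC (A : ∀ i, Set (E i)) (i : Fin n) :
    Continuous (restC A i) :=
  continuous_pi fun k => continuous_apply k.1

lemma zC_eval (A : ∀ i, Set (E i)) (i : Fin n) (f : COpp A i → ℝ) (a : CProfile A) :
    zC A i f i a = f (restC A i a) := by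
  simp only [zC, if_pos rfl]; rfl

lemma zC_eval_ne (A : ∀ i, Set (E i)) (i : Fin n) (f : COpp A i → ℝ) {j : Fin n}
    (h : j ≠ i) (a : CProfile A) : zC A i f j a = 0 := by simp [zC, h]

lemma isCC_add_zC (A : ∀ i, Set (E i)) (hconv : ∀ i, Convex ℝ (A i)) (u : CGame A)
    (hu : IsCCGame A hconv u) (i : Fin n) (f : COpp A i → ℝ) (hf : Continuous f) :
    IsCCGame A hconv (u + zC A i f) := by
  constructor
  · intro j
    have hz : Continuous (zC A i f j) := by
      by_cases h : j = i
      · subst h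
        have : zC A j f j = fun a => f (restC A j a) := by
          funext a; exact zC_eval A j f a
        rw [this]
        exact hf.comp (continuous_restC A j)
      · have : zC A i f j = fun _ => (0:ℝ) := by
          funext a; exact zC_eval_ne A i f h a
        rw [this]
        exact continuous_const
    simpa using (hu.1 j).add hz
  · intro j a x y s t hs ht hst
    have hzc : ∀ v : ↥(A j), zC A i f j (Function.update a j v) = zC A i f j a := by
      intro v
      by_cases h : j = i
      · subst h
        rw [zC_eval, zC_eval, restC_update]
      · rw [zC_eval_ne A i f h, zC_eval_ne A i f h]
    have := hu.2 j a x y s t hs ht hst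
    simp only [Pi.add_apply, hzc]
    have hc : s * zC A i f j a + t * zC A i f j a = zC A i f j a := by
      rw [← add_mul, hst, one_mul]
    nlinarith [this]

section metric

variable (A : ∀ i, Set (E i)) (i : Fin n)

lemma dist_mergeC_le (ai : ↥(A i)) (b b' : COpp A i) :
    dist (mergeC A i ai b) (mergeC A i ai b') ≤ dist b b' := by
  rw [dist_pi_le_iff dist_nonneg]
  intro j
  by_cases h : j = i
  · subst h
    rw [mergeC_apply_self, mergeC_apply_self]
    simpa using dist_nonneg
  · rw [mergeC_apply_ne A i ai b h, mergeC_apply_ne A i ai b' h]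
    exact dist_le_pi_dist b b' ⟨j, h⟩

lemma exists_bound (hA : ∀ i, IsCompact (A i)) (hne : ∀ i, (A i).Nonempty)
    (g : CProfile A → ℝ) (hg : Continuous g) :
    ∃ C : ℝ, 0 ≤ C ∧ ∀ p : CProfile A, |g p| ≤ C := by
  haveI : ∀ j, CompactSpace ↥(A j) := fun j => isCompact_iff_compactSpace.mp (hA j)
  haveI : ∀ j, Nonempty ↥(A j) := fun j => (hne j).to_subtype
  obtain ⟨C, hC⟩ := (isCompact_range hg).isBounded.exists_norm_le
  refine ⟨C, le_trans (norm_nonneg _) (hC _ ⟨Classical.arbitrary _, rfl⟩), fun p => ?_⟩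
  simpa [Real.norm_eq_abs] using hC (g p) ⟨p, rfl⟩

/-- Continuity of the best-reply payoff function. -/
lemma continuous_supf (hA : ∀ i, IsCompact (A i)) (hne : ∀ i, (A i).Nonempty)
    (g : CProfile A → ℝ) (hg : Continuous g) :
    Continuous fun b : COpp A i => ⨆ c : ↥(A i), g (mergeC A i c b) := by
  haveI : ∀ j, CompactSpace ↥(A j) := fun j => isCompact_iff_compactSpace.mp (hA j)
  haveI : ∀ j, Nonempty ↥(A j) := fun j => (hne j).to_subtype
  obtain ⟨C, hC0, hC⟩ := exists_bound A hA hne g hg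
  have hbdd : ∀ b : COpp A i, BddAbove (Set.range fun c : ↥(A i) => g (mergeC A i c b)) :=
    fun b => ⟨C, by rintro y ⟨c, rfl⟩; exact (abs_le.mp (hC _)).2⟩
  have hUC : UniformContinuous g := CompactSpace.uniformContinuous_of_continuous hg
  rw [Metric.continuous_iff]
  intro b ε hε
  obtain ⟨δ, hδ, hδ'⟩ := Metric.uniformContinuous_iff.mp hUC (ε/2) (by linarith)
  refine ⟨δ, hδ, fun b' hb' => ?_⟩
  have key : ∀ b₁ b₂ : COpp A i, dist b₁ b₂ < δ →
      (⨆ c : ↥(A i), g (mergeC A i c b₁)) ≤ (⨆ c : ↥(A i), g (mergeC A i c b₂)) + ε/2 := by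
    intro b₁ b₂ h12
    refine ciSup_le fun c => ?_
    have : dist (g (mergeC A i c b₁)) (g (mergeC A i c b₂)) < ε/2 :=
      hδ' (lt_of_le_of_lt (dist_mergeC_le A i c b₁ b₂) h12)
    rw [Real.dist_eq, abs_sub_lt_iff] at this
    have h2 : g (mergeC A i c b₂) ≤ ⨆ c : ↥(A i), g (mergeC A i c b₂) :=
      le_ciSup (hbdd b₂) c
    linarith [this.1]
  have h1 := key b' b hb'
  have h2 := key b b' (by rw [dist_comm]; exact hb')
  rw [Real.dist_eq, abs_sub_lt_iff]
  constructor <;> linarith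

end metric


/-- A pure-strategies solution of continuous convex games satisfying Continuous
Strategic Equivalence (CSE), Pure Individual Rationality (PIR), and the
Simultaneous Maximizer axiom (SM) coincides with the pure Nash equilibrium
correspondence. -/
theorem statement16 {n : ℕ} (hn : 0 < n) {E : Fin n → Type*}
    [∀ i, NormedAddCommGroup (E i)] [∀ i, NormedSpace ℝ (E i)]
    (A : ∀ i, Set (E i)) (hA : ∀ i, IsCompact (A i)) (hconv : ∀ i, Convex ℝ (A i))
    (hne : ∀ i, (A i).Nonempty)
    (S : CGame A → Set (CProfile A))
    (CSE : ∀ u : CGame A, IsCCGame A hconv u →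
      ∀ (i : Fin n) (f : COpp A i → ℝ), Continuous f → S u = S (u + zC A i f))
    (PIR : ∀ u : CGame A, IsCCGame A hconv u →
      ∀ x ∈ S u, ∀ i : Fin n, u i x ≥ pirC A u i)
    (SM : ∀ u : CGame A, IsCCGame A hconv u → ∀ a : CProfile A,
      (∀ (i : Fin n) (b : CProfile A), u i a ≥ u i b) → a ∈ S u) :
    ∀ u : CGame A, IsCCGame A hconv u → S u = {a | IsPNEc A u a} := by
  intro u hu
  haveI : ∀ j, CompactSpace ↥(A j) := fun j => isCompact_iff_compactSpace.mp (hA j)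
  haveI : ∀ j, Nonempty ↥(A j) := fun j => (hne j).to_subtype
  apply Set.eq_of_subset_of_subset
  · -- S u ⊆ PNE u
    intro x hx i c
    refine le_of_forall_pos_le_add fun ε hε => ?_
    obtain ⟨C, hC0, hC⟩ := exists_bound A hA hne (u i) (hu.1 i)
    have hUC : UniformContinuous (u i) := CompactSpace.uniformContinuous_of_continuous (hu.1 i)
    obtain ⟨δ, hδ, hδ'⟩ := Metric.uniformContinuous_iff.mp hUC ε hε
    set M : ℝ := 2 * C / δ with hM
    have hM0 : 0 ≤ M := by positivity
    set xo := restC A i x with hxo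
    set f : COpp A i → ℝ := fun b => M * dist b xo with hf
    have hfc : Continuous f := continuous_const.mul (continuous_id.dist continuous_const)
    set u' := u + zC A i f with hu'
    have hcc' := isCC_add_zC A hconv u hu i f hfc
    have hx' : x ∈ S u' := by rw [hu', ← CSE u hu i f hfc]; exact hx
    have hpir := PIR u' hcc' x hx' i
    have hux : u' i x = u i x := by
      rw [hu', Pi.add_apply, Pi.add_apply, zC_eval, hf]
      simp [← hxo]
    have heval : ∀ (ai : ↥(A i)) (b : COpp A i),
        u' i (mergeC A i ai b) = u i (mergeC A i ai b) + M * dist b xo := by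
      intro ai b
      rw [hu', Pi.add_apply, Pi.add_apply, zC_eval, restC_mergeC, hf]
    have key : ∀ (ai : ↥(A i)) (b : COpp A i),
        u i (mergeC A i ai xo) - ε ≤ u' i (mergeC A i ai b) := by
      intro ai b
      rw [heval]
      by_cases hd : dist b xo < δ
      · have h1 := hδ' (lt_of_le_of_lt (dist_mergeC_le A i ai b xo) hd)
        rw [Real.dist_eq, abs_sub_lt_iff] at h1
        nlinarith [mul_nonneg hM0 (dist_nonneg : (0:ℝ) ≤ dist b xo)]
      · push_neg at hd
        have h1 : M * δ ≤ M * dist b xo := mul_le_mul_of_nonneg_left hd hM0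
        have h2 : M * δ = 2 * C := by
          rw [hM]; field_simp
        have h3 := (abs_le.mp (hC (mergeC A i ai b))).1
        have h4 := (abs_le.mp (hC (mergeC A i ai xo))).2
        linarith
    have hlow : ∀ ai : ↥(A i), BddBelow (Set.range fun b => u' i (mergeC A i ai b)) := by
      intro ai
      refine ⟨-C, ?_⟩
      rintro y ⟨b, rfl⟩
      show -C ≤ u' i (mergeC A i ai b)
      rw [heval]
      have := (abs_le.mp (hC (mergeC A i ai b))).1
      nlinarith [mul_nonneg hM0 (dist_nonneg : (0:ℝ) ≤ dist b xo)]
    have hup : BddAbove (Set.range fun ai : ↥(A i) => ⨅ b, u' i (mergeC A i ai b)) := by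
      refine ⟨C, ?_⟩
      rintro y ⟨ai, rfl⟩
      calc (⨅ b, u' i (mergeC A i ai b)) ≤ u' i (mergeC A i ai xo) := ciInf_le (hlow ai) xo
        _ = u i (mergeC A i ai xo) + M * dist xo xo := heval ai xo
        _ ≤ C := by simpa using (abs_le.mp (hC (mergeC A i ai xo))).2
    have hchain : u i (mergeC A i c xo) - ε ≤ pirC A u' i :=
      le_trans (le_ciInf (key c)) (le_ciSup hup c)
    have hmerge : mergeC A i c xo = Function.update x i c := (update_eq_mergeC A i x c).symm
    rw [hmerge] at hchain
    have : pirC A u' i ≤ u i x := hux ▸ hpir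
    linarith
  · -- PNE u ⊆ S u
    intro a ha
    set f : ∀ j, COpp A j → ℝ := fun j b => ⨆ c : ↥(A j), u j (mergeC A j c b) with hfdef
    have hfc : ∀ j, Continuous (f j) := fun j => continuous_supf A j hA hne (u j) (hu.1 j)
    set zg : Fin n → CGame A := fun j => zC A j (fun b => -(f j b)) with hzg
    have main : ∀ t : Finset (Fin n),
        IsCCGame A hconv (u + ∑ j ∈ t, zg j) ∧ S u = S (u + ∑ j ∈ t, zg j) := by
      intro t
      induction t using Finset.induction_on with
      | empty => simpa using hu
      | @insert j t hjt ih =>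
        obtain ⟨ihcc, ihS⟩ := ih
        have hre : u + ∑ k ∈ insert j t, zg k = (u + ∑ k ∈ t, zg k) + zg j := by
          rw [Finset.sum_insert hjt]; abel
        rw [hre]
        refine ⟨isCC_add_zC A hconv _ ihcc j _ (hfc j).neg, ?_⟩
        rw [ihS]
        exact CSE _ ihcc j _ (hfc j).neg
    obtain ⟨hccw, hSw⟩ := main Finset.univ
    rw [hSw]
    apply SM _ hccw
    intro j b
    have hw : ∀ p, (u + ∑ k, zg k) j p = u j p - f j (restC A j p) := by
      intro p
      rw [Pi.add_apply, Pi.add_apply, Finset.sum_apply, Finset.sum_apply]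
      have : ∑ k, zg k j p = -(f j (restC A j p)) := by
        rw [Finset.sum_eq_single j]
        · rw [hzg]; exact zC_eval A j _ p
        · intro k _ hk
          rw [hzg]; exact zC_eval_ne A k _ (Ne.symm hk) p
        · intro h; exact absurd (Finset.mem_univ j) h
      rw [this]; ring
    rw [hw a, hw b]
    obtain ⟨C, hC0, hC⟩ := exists_bound A hA hne (u j) (hu.1 j)
    have hbdd : BddAbove (Set.range fun c : ↥(A j) => u j (mergeC A j c (restC A j b))) :=
      ⟨C, by rintro y ⟨c, rfl⟩; exact (abs_le.mp (hC _)).2⟩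
    have h1 : u j b ≤ f j (restC A j b) := by
      have := le_ciSup hbdd (b j)
      rwa [mergeC_restC] at this
    have h2 : f j (restC A j a) ≤ u j a := by
      refine ciSup_le fun c => ?_
      rw [← update_eq_mergeC]
      exact ha j c
    linarith
end
end
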